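/- For every set Ω₀ ⊆ Ω̄ which is relatively open in Ω̄ and satisfies Ω₀ ∩ {d=0} ≠ ∅, one has ∫_{Ω₀} d_x²/d = ∞. -/

import Mathlib

open MeasureTheory Set

-- Core lemma: right interval anchored at a zero of d
lemma aux_core (a b c η : ℝ) (d : ℝ → ℝ) (hac : a ≤ c) (hη : 0 < η) (hcb : c + η ≤ b)
    (hd_cont : ContinuousOn d (Set.Icc a b))
    (hd_nonneg : ∀ x ∈ Set.Icc a b, 0 ≤ d x)
    (hderiv : ∀ t ∈ Set.Ioo c (c+η), 0 < d t → HasDerivAt d (deriv d t) t)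
    (hdc : d c = 0)
    (hpos : ∀ᵐ x ∂(volume.restrict (Set.Ioo c (c+η))), 0 < d x)
    (hK : (∫⁻ x in Set.Ioo c (c+η), ENNReal.ofReal ((deriv d x)^2 / d x)) ≠ ⊤)
    (hfin : (∫⁻ x in Set.Ioo c (c+η), (ENNReal.ofReal (d x))⁻¹) ≠ ⊤) : False := by
  set K := (∫⁻ x in Set.Ioo c (c+η), ENNReal.ofReal ((deriv d x)^2 / d x)).toReal with hKdef
  have hK0 : 0 ≤ K := ENNReal.toReal_nonneg
  -- main claim
  have hclaim : ∀ x ∈ Set.Ioo c (c+η), d x ≤ K * (x - c) := by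
    intro x hx
    have hcx : c < x := hx.1
    have hxb : x ≤ b := by linarith [hx.2]
    have hIccsub : Icc c x ⊆ Icc a b := Icc_subset_Icc hac hxb
    obtain ⟨y, hy, hymax⟩ := (isCompact_Icc : IsCompact (Icc c x)).exists_isMaxOn
      ⟨c, left_mem_Icc.mpr hcx.le⟩ (hd_cont.mono hIccsub)
    have hdxy : d x ≤ d y := hymax (right_mem_Icc.mpr hcx.le)
    by_cases hm : d y ≤ 0
    · nlinarith [mul_nonneg hK0 (sub_nonneg.mpr hcx.le)]
    push_neg at hm
    -- the last zero below y
    set Z := {t ∈ Icc c y | d t = 0} with hZdef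
    have hZne : Z.Nonempty := ⟨c, ⟨left_mem_Icc.mpr hy.1, hdc⟩⟩
    have hZbdd : BddAbove Z := (bddAbove_Icc).mono (fun t ht => ht.1)
    have hZclosed : IsClosed Z := by
      have hcont : ContinuousOn d (Icc c y) := hd_cont.mono (Icc_subset_Icc hac (hy.2.trans hxb))
      have h4 : IsClosed (Icc c y ∩ d ⁻¹' {(0:ℝ)}) :=
        hcont.preimage_isClosed_of_isClosed isClosed_Icc isClosed_singleton
      have : Z = Icc c y ∩ d ⁻¹' {(0:ℝ)} := by
        ext t; simp [hZdef, Set.mem_inter_iff, Set.mem_preimage]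
      rw [this]; exact h4
    set z := sSup Z with hzdef
    have hzZ : z ∈ Z := hZclosed.csSup_mem hZne hZbdd
    have hdz : d z = 0 := hzZ.2
    have hzy : z < y := lt_of_le_of_ne hzZ.1.2 (fun h => by rw [h] at hdz; linarith)
    have hcz : c ≤ z := hzZ.1.1
    have hpos' : ∀ t ∈ Ioc z y, 0 < d t := by
      intro t ht
      rcases lt_or_eq_of_le (hd_nonneg t (hIccsub ⟨hcz.trans ht.1.le, ht.2.trans hy.2⟩)) with h | h
      · exact h
      · exfalso
        have : t ∈ Z := ⟨⟨hcz.trans ht.1.le, ht.2⟩, h.symm⟩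
        exact absurd (le_csSup hZbdd this) (not_le.mpr ht.1)
    have hsub : Ioc z y ⊆ Ioo c (c+η) := fun t ht =>
      ⟨lt_of_le_of_lt hcz ht.1, lt_of_le_of_lt (ht.2.trans hy.2) hx.2⟩
    set h := x - c with hhdef
    have hh : 0 < h := sub_pos.mpr hcx
    set g := deriv d with hgdef
    set q := fun t => (g t)^2 / d t with hqdef
    -- integrability of q on Ioc z y
    have hdmeas : AEMeasurable d (volume.restrict (Ioc z y)) :=
      (hd_cont.mono (fun t ht => hIccsub ⟨hcz.trans ht.1.le, ht.2.trans hy.2⟩)).aemeasurable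
        measurableSet_Ioc
    have hqmeas : AEMeasurable q (volume.restrict (Ioc z y)) :=
      ((measurable_deriv d).pow_const 2).aemeasurable.div hdmeas
    have hq_nonneg : ∀ t ∈ Ioc z y, 0 ≤ q t := fun t ht => by
      have := hpos' t ht; positivity
    have hq_lint : (∫⁻ t in Ioc z y, ENNReal.ofReal (q t)) ≤
        ∫⁻ t in Set.Ioo c (c+η), ENNReal.ofReal ((deriv d t)^2 / d t) :=
      lintegral_mono_set hsub
    have hq_int : IntegrableOn q (Ioc z y) := by
      refine ⟨hqmeas.aestronglyMeasurable, ?_⟩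
      rw [hasFiniteIntegral_iff_norm]
      have : (∫⁻ t in Ioc z y, ENNReal.ofReal ‖q t‖) = ∫⁻ t in Ioc z y, ENNReal.ofReal (q t) := by
        refine lintegral_congr_ae ?_
        filter_upwards [ae_restrict_mem measurableSet_Ioc] with t ht
        rw [Real.norm_eq_abs, abs_of_nonneg (hq_nonneg t ht)]
      rw [this]
      exact lt_of_le_of_lt hq_lint (lt_top_iff_ne_top.mpr hK)
    have hp_int : IntegrableOn d (Ioc z y) :=
      ((hd_cont.mono (Icc_subset_Icc (hac.trans hcz) (hy.2.trans hxb))).integrableOn_Icc).mono_set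
        Ioc_subset_Icc_self
    set B := fun t => (h/2) * q t + (1/(2*h)) * d t with hBdef
    have hB_int : IntegrableOn B (Ioc z y) := (hq_int.const_mul _).add (hp_int.const_mul _)
    have hbound : ∀ t ∈ Ioc z y, ‖g t‖ ≤ B t := by
      intro t ht
      have hdt := hpos' t ht
      rw [Real.norm_eq_abs]
      have h1 : 2 * |g t| * h * d t ≤ h^2 * (g t)^2 + (d t)^2 := by
        nlinarith [sq_nonneg (h * |g t| - d t), sq_abs (g t)]
      have hBt : B t = (h^2 * (g t)^2 + (d t)^2) / (2 * h * d t) := by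
        simp only [hBdef, hqdef]
        field_simp
      rw [hBt, le_div_iff₀ (by positivity)]
      nlinarith
    have hg_int : IntegrableOn g (Ioc z y) :=
      Integrable.mono' hB_int (measurable_deriv d).aestronglyMeasurable
        ((ae_restrict_iff' measurableSet_Ioc).mpr (Filter.Eventually.of_forall hbound))
    -- FTC
    have hftc : ∫ t in z..y, g t = d y - d z := by
      refine intervalIntegral.integral_eq_sub_of_hasDeriv_right_of_le hzy.le
        (hd_cont.mono (Icc_subset_Icc (hac.trans hcz) (hy.2.trans hxb))) ?_
        ((intervalIntegrable_iff_integrableOn_Ioc_of_le hzy.le).mpr hg_int)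
      intro t ht
      exact ((hderiv t (hsub ⟨ht.1, ht.2.le⟩) (hpos' t ⟨ht.1, ht.2.le⟩))).hasDerivWithinAt
    have hqint_le : ∫ t in Ioc z y, q t ≤ K := by
      rw [integral_eq_lintegral_of_nonneg_ae
        ((ae_restrict_iff' measurableSet_Ioc).mpr (Filter.Eventually.of_forall hq_nonneg))
        hqmeas.aestronglyMeasurable]
      exact ENNReal.toReal_mono hK hq_lint
    have hpint_le : ∫ t in Ioc z y, d t ≤ (y - z) * d y := by
      have h1 : ∫ t in Ioc z y, d t ≤ ∫ _t in Ioc z y, d y := by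
        refine setIntegral_mono_on hp_int ((integrableOn_const_iff).mpr (Or.inr ?_))
          measurableSet_Ioc ?_
        · rw [Real.volume_Ioc]; exact ENNReal.ofReal_lt_top
        · intro t ht
          exact hymax ⟨hcz.trans ht.1.le, ht.2.trans hy.2⟩
      rw [setIntegral_const, Real.volume_real_Ioc_of_le (by linarith),
        smul_eq_mul] at h1
      linarith [h1]
    have hBint : ∫ t in Ioc z y, B t = (h/2) * (∫ t in Ioc z y, q t)
        + (1/(2*h)) * ∫ t in Ioc z y, d t := by
      rw [integral_add (hq_int.const_mul _) (hp_int.const_mul _), integral_const_mul,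
        integral_const_mul]
    have hdy : d y ≤ (h/2) * K + (1/(2*h)) * ((y-z)*(d y)) := by
      have e1 : d y = ∫ t in Ioc z y, g t := by
        rw [← intervalIntegral.integral_of_le hzy.le, hftc, hdz, sub_zero]
      have e2 : ∫ t in Ioc z y, g t ≤ ∫ t in Ioc z y, B t := by
        refine setIntegral_mono_on hg_int hB_int measurableSet_Ioc ?_
        intro t ht
        exact (le_abs_self _).trans (by rw [← Real.norm_eq_abs]; exact hbound t ht)
      have e3 : (h/2) * (∫ t in Ioc z y, q t) ≤ (h/2)*K :=
        mul_le_mul_of_nonneg_left hqint_le (by linarith)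
      have e4 : (1/(2*h)) * (∫ t in Ioc z y, d t) ≤ (1/(2*h)) * ((y-z)*(d y)) :=
        mul_le_mul_of_nonneg_left hpint_le (by positivity)
      rw [hBint] at e2; linarith [e1, e2, e3, e4]
    have hyz : y - z ≤ h := by
      have := hy.2; have := hzZ.1.1; simp only [hhdef]; linarith
    -- conclude
    have e5 : 1/(2*h) * ((y-z) * d y) ≤ d y / 2 := by
      have h6 : (y-z) * d y ≤ h * d y := mul_le_mul_of_nonneg_right hyz hm.le
      have h7 : 1/(2*h) * (h * d y) = d y / 2 := by field_simp
      calc 1/(2*h) * ((y-z) * d y) ≤ 1/(2*h) * (h * d y) :=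
            mul_le_mul_of_nonneg_left h6 (by positivity)
        _ = d y / 2 := h7
    have : d y ≤ K * h := by clear_value h; linarith
    linarith [hdxy]
  -- Part 2: contradiction with integrability of 1/d
  have hvol : volume.restrict (Set.Ioo c (c+η)) ≠ 0 := by
    simp only [ne_eq, Measure.restrict_eq_zero, Real.volume_Ioo, ENNReal.ofReal_eq_zero,
      not_le]
    linarith
  haveI := ae_neBot.mpr hvol
  obtain ⟨x₁, hx₁pos, hx₁mem⟩ := (hpos.and (ae_restrict_mem measurableSet_Ioo)).exists
  have hKpos : 0 < K := by
    have := hclaim x₁ hx₁mem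
    nlinarith [hx₁mem.1, hx₁pos]
  set f := fun x : ℝ => (K * (x - c))⁻¹ with hfdef
  have hf_meas : Measurable f := ((measurable_id.sub_const c).const_mul K).inv
  have hf_fin : HasFiniteIntegral f (volume.restrict (Set.Ioo c (c+η))) := by
    rw [hasFiniteIntegral_iff_norm]
    have hae : ∀ᵐ x ∂(volume.restrict (Set.Ioo c (c+η))),
        ENNReal.ofReal ‖f x‖ ≤ (ENNReal.ofReal (d x))⁻¹ := by
      filter_upwards [hpos, ae_restrict_mem measurableSet_Ioo] with x hdx hxA
      have h1 : 0 < K * (x - c) := mul_pos hKpos (by linarith [hxA.1])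
      have h2 : d x ≤ K * (x - c) := hclaim x hxA
      calc ENNReal.ofReal ‖f x‖ = ENNReal.ofReal ((K * (x-c))⁻¹) := by
            rw [Real.norm_eq_abs, abs_of_nonneg (by positivity)]
        _ = (ENNReal.ofReal (K * (x-c)))⁻¹ := ENNReal.ofReal_inv_of_pos h1
        _ ≤ (ENNReal.ofReal (d x))⁻¹ := ENNReal.inv_le_inv' (ENNReal.ofReal_le_ofReal h2)
    exact lt_of_le_of_lt (lintegral_mono_ae hae) (lt_top_iff_ne_top.mpr hfin)
  have hf_int : IntegrableOn f (Set.Ioo c (c+η)) := ⟨hf_meas.aestronglyMeasurable, hf_fin⟩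
  have hinv_int : IntegrableOn (fun x => (x - c)⁻¹) (Set.Ioo c (c+η)) := by
    have h8 := hf_int.const_mul K
    have hfe : (fun x => K * f x) = (fun x : ℝ => (x - c)⁻¹) := by
      funext x
      simp only [hfdef]
      rw [mul_inv, ← mul_assoc, mul_inv_cancel₀ hKpos.ne', one_mul]
    rwa [hfe] at h8
  have : IntervalIntegrable (fun x => (x - c)⁻¹) volume c (c+η) := by
    rw [intervalIntegrable_iff_integrableOn_Ioc_of_le (by linarith)]
    rwa [integrableOn_Ioc_iff_integrableOn_Ioo]
  rcases intervalIntegrable_sub_inv_iff.mp this with h | h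
  · linarith
  · exact h (left_mem_uIcc)
/-- Lemma `lem41`: for every relatively open `Ω₀ ⊆ Ω̄` meeting the zero set of `d`,
the integral `∫_{Ω₀} d_x²/d` is infinite. -/
theorem stmt_4
    (a b : ℝ) (hab : a < b)
    (d : ℝ → ℝ)
    (hd_cont : ContinuousOn d (Set.Icc a b))
    (hd_nonneg : ∀ x ∈ Set.Icc a b, 0 ≤ d x)
    (hd_C1 : ContDiffOn ℝ 1 d {x ∈ Set.Icc a b | 0 < d x})
    (hd_int : (∫⁻ x in Set.Ioo a b, (ENNReal.ofReal (d x))⁻¹) < ⊤) :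
    ∀ Ω₀ : Set ℝ, (∃ U : Set ℝ, IsOpen U ∧ Ω₀ = U ∩ Set.Icc a b) →
      (∃ x ∈ Ω₀, d x = 0) →
      (∫⁻ x in Ω₀, ENNReal.ofReal ((deriv d x) ^ 2 / d x)) = ⊤ := by
  rintro Ω₀ ⟨U, hU, rfl⟩ ⟨x₀, hx₀, hdx₀⟩
  by_contra hcon
  -- a.e. positivity of d on Ioo a b
  have hpos_ae : ∀ᵐ x, x ∈ Set.Ioo a b → 0 < d x := by
    have hmeas : AEMeasurable (fun x => (ENNReal.ofReal (d x))⁻¹)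
        (volume.restrict (Set.Ioo a b)) :=
      (((hd_cont.mono Ioo_subset_Icc_self).aemeasurable measurableSet_Ioo).ennreal_ofReal).inv
    have h1 : ∀ᵐ x ∂(volume.restrict (Set.Ioo a b)), (ENNReal.ofReal (d x))⁻¹ < ⊤ :=
      ae_lt_top' hmeas hd_int.ne
    have h2 : ∀ᵐ x ∂(volume.restrict (Set.Ioo a b)), 0 < d x := by
      filter_upwards [h1] with x hx
      rw [ENNReal.inv_lt_top, ENNReal.ofReal_pos] at hx
      exact hx
    exact ae_imp_of_ae_restrict h2
  -- derivative exists at interior points with d > 0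
  have hderiv_all : ∀ t ∈ Set.Ioo a b, 0 < d t → HasDerivAt d (deriv d t) t := by
    intro t ht hdt
    have h1 : Set.Icc a b ∈ nhds t := Icc_mem_nhds ht.1 ht.2
    have h2 : ContinuousAt d t := hd_cont.continuousAt h1
    have h3 : ∀ᶠ x in nhds t, 0 < d x := h2.eventually (eventually_gt_nhds hdt)
    have hS : {x ∈ Set.Icc a b | 0 < d x} ∈ nhds t := by
      filter_upwards [h1, h3] with x h1x h3x
      exact ⟨h1x, h3x⟩
    exact (((hd_C1.differentiableOn one_ne_zero) t (mem_of_mem_nhds hS)).differentiableAt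
      hS).hasDerivAt
  -- find a radius around x₀ inside U
  have hUnhds : U ∈ nhds x₀ := hU.mem_nhds hx₀.1
  obtain ⟨ε, hε, hball⟩ := Metric.mem_nhds_iff.mp hUnhds
  have hx₀ab : x₀ ∈ Set.Icc a b := hx₀.2
  rcases lt_or_eq_of_le hx₀ab.2 with hx₀b | hx₀b
  · -- case x₀ < b : interval to the right
    set η := min ε (b - x₀) with hηdef
    have hη : 0 < η := lt_min hε (by linarith)
    have hsubU : Set.Ioo x₀ (x₀ + η) ⊆ U ∩ Set.Icc a b := by
      intro t ht
      have h5 : t ∈ Metric.ball x₀ ε := by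
        rw [Real.ball_eq_Ioo]
        constructor <;> [linarith [ht.1, hε]; linarith [ht.2, min_le_left ε (b - x₀)]]
      refine ⟨hball h5, ⟨hx₀ab.1.trans ht.1.le, ?_⟩⟩
      have := min_le_right ε (b - x₀); linarith [ht.2]
    have hsubIoo : Set.Ioo x₀ (x₀ + η) ⊆ Set.Ioo a b := by
      intro t ht
      refine ⟨lt_of_le_of_lt hx₀ab.1 ht.1, ?_⟩
      have := min_le_right ε (b - x₀); linarith [ht.2]
    refine aux_core a b x₀ η d hx₀ab.1 hη (by have := min_le_right ε (b - x₀); linarith) hd_cont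
      hd_nonneg (fun t ht hdt => hderiv_all t (hsubIoo ht) hdt) hdx₀ ?_ ?_ ?_
    · -- hpos on subinterval
      have := ae_restrict_of_ae (μ := volume) (s := Set.Ioo x₀ (x₀ + η)) hpos_ae
      filter_upwards [this, ae_restrict_mem measurableSet_Ioo] with x h1 h2
      exact h1 (hsubIoo h2)
    · exact fun h => hcon (top_unique (h ▸ lintegral_mono_set hsubU))
    · exact fun h => hd_int.ne (top_unique (h ▸ lintegral_mono_set hsubIoo))
  · -- case x₀ = b : reflect
    rw [hx₀b] at hball hdx₀
    set s := a + b with hsdef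
    set e := fun x => d (s - x) with hedef
    set r := fun x : ℝ => s - x with hrdef
    have hr : MeasurePreserving r volume volume := Measure.measurePreserving_sub_left volume s
    have hre : MeasurableEmbedding r := (Homeomorph.subLeft s).measurableEmbedding
    have hmapIoo : ∀ t, t ∈ Set.Ioo a b → s - t ∈ Set.Ioo a b := by
      intro t ht
      obtain ⟨h1, h2⟩ := ht
      refine ⟨?_, ?_⟩
      · simp only [hsdef]; linarith
      · simp only [hsdef]; linarith
    have hmapIcc : ∀ t, t ∈ Set.Icc a b → s - t ∈ Set.Icc a b := by
      intro t ht
      obtain ⟨h1, h2⟩ := ht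
      refine ⟨?_, ?_⟩
      · simp only [hsdef]; linarith
      · simp only [hsdef]; linarith
    set η := min ε (b - a) with hηdef
    have hη : 0 < η := lt_min hε (by linarith)
    have hηa : η ≤ ε := min_le_left _ _
    have hηb' : η ≤ b - a := min_le_right _ _
    have hηb : a + η ≤ b := by linarith
    have hsubU : Set.Ioo (b - η) b ⊆ U ∩ Set.Icc a b := by
      intro t ht
      have h5 : t ∈ Metric.ball b ε := by
        rw [Real.ball_eq_Ioo]
        exact ⟨by linarith [ht.1], by linarith [ht.2]⟩
      exact ⟨hball h5, ⟨by linarith [ht.1], ht.2.le⟩⟩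
    have hsubIoo : Set.Ioo (b - η) b ⊆ Set.Ioo a b := fun t ht =>
      ⟨by linarith [ht.1], ht.2⟩
    have hpre : r ⁻¹' (Set.Ioo (b - η) b) = Set.Ioo a (a + η) := by
      ext t
      simp only [hrdef, Set.mem_preimage, Set.mem_Ioo, hsdef]
      constructor <;> (intro h; exact ⟨by linarith [h.1, h.2], by linarith [h.1, h.2]⟩)
    have he_cont : ContinuousOn e (Set.Icc a b) := by
      refine hd_cont.comp ((continuous_const.sub continuous_id).continuousOn) ?_
      intro t ht
      exact hmapIcc t ht
    have he_nonneg : ∀ x ∈ Set.Icc a b, 0 ≤ e x := fun x hx => hd_nonneg _ (hmapIcc x hx)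
    have hea : e a = 0 := by
      simp only [hedef, hsdef]
      rw [show a + b - a = b by ring]
      exact hdx₀
    have hderiv_e : ∀ t ∈ Set.Ioo a (a + η), 0 < e t → HasDerivAt e (deriv e t) t := by
      intro t ht het
      have htab : t ∈ Set.Ioo a b := ⟨ht.1, lt_of_lt_of_le ht.2 hηb⟩
      have hk := hderiv_all (s - t) (hmapIoo t htab) het
      have hinner : HasDerivAt (fun x : ℝ => s - x) (-1) t := by
        simpa using (hasDerivAt_id t).const_sub s
      have : HasDerivAt e (deriv d (s - t) * (-1)) t := HasDerivAt.comp t hk hinner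
      rwa [this.deriv]
    have hpos_e_ae : ∀ᵐ x, x ∈ Set.Ioo a b → 0 < e x := by
      rw [ae_iff] at hpos_ae ⊢
      have hset : {x | ¬(x ∈ Set.Ioo a b → 0 < e x)}
          = r ⁻¹' {x | ¬(x ∈ Set.Ioo a b → 0 < d x)} := by
        ext t
        simp only [Set.mem_setOf_eq, Set.mem_preimage, hedef, hrdef, Classical.not_imp]
        constructor
        · rintro ⟨h1, h2⟩
          exact ⟨hmapIoo t h1, h2⟩
        · rintro ⟨h1, h2⟩
          refine ⟨?_, h2⟩
          have := hmapIoo _ h1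
          rwa [show s - (s - t) = t by ring] at this
      rw [hset]
      exact hr.quasiMeasurePreserving.preimage_null hpos_ae
    refine aux_core a b a η e le_rfl hη hηb he_cont he_nonneg hderiv_e hea ?_ ?_ ?_
    · have := ae_restrict_of_ae (μ := volume) (s := Set.Ioo a (a + η)) hpos_e_ae
      filter_upwards [this, ae_restrict_mem measurableSet_Ioo] with x h1 h2
      exact h1 ⟨h2.1, lt_of_lt_of_le h2.2 hηb⟩
    · set F := fun t => ENNReal.ofReal ((deriv d t) ^ 2 / d t) with hFdef
      have step1 : (∫⁻ x in Set.Ioo a (a + η), ENNReal.ofReal ((deriv e x) ^ 2 / e x))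
          = ∫⁻ x in Set.Ioo a (a + η), F (s - x) := by
        refine lintegral_congr_ae ?_
        have h6 := ae_restrict_of_ae (μ := volume) (s := Set.Ioo a (a + η)) hpos_e_ae
        filter_upwards [h6, ae_restrict_mem measurableSet_Ioo] with x h1 h2
        have hxab : x ∈ Set.Ioo a b := ⟨h2.1, lt_of_lt_of_le h2.2 hηb⟩
        have hex : 0 < e x := h1 hxab
        have hk := hderiv_all (s - x) (hmapIoo x hxab) hex
        have hinner : HasDerivAt (fun t : ℝ => s - t) (-1) x := by
          simpa using (hasDerivAt_id x).const_sub s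
        have hcomp : HasDerivAt e (deriv d (s - x) * (-1)) x := HasDerivAt.comp x hk hinner
        rw [hFdef, hcomp.deriv]
        simp only [hedef]
        ring_nf
      have step2 : (∫⁻ x in Set.Ioo a (a + η), F (s - x)) = ∫⁻ y in Set.Ioo (b - η) b, F y := by
        rw [← hpre]
        exact hr.setLIntegral_comp_preimage_emb hre F (Set.Ioo (b - η) b)
      rw [step1, step2]
      exact fun h => hcon (top_unique (h ▸ lintegral_mono_set hsubU))
    · have step2 : (∫⁻ x in Set.Ioo a (a + η), (ENNReal.ofReal (e x))⁻¹)
          = ∫⁻ y in Set.Ioo (b - η) b, (ENNReal.ofReal (d y))⁻¹ := by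
        rw [← hpre]
        exact hr.setLIntegral_comp_preimage_emb hre (fun y => (ENNReal.ofReal (d y))⁻¹)
          (Set.Ioo (b - η) b)
      rw [step2]
      exact fun h => hd_int.ne (top_unique (h ▸ lintegral_mono_set hsubIoo))
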